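/- arXiv:2311.02663 — 2 statements merged into one kernel-verified Lean document; each statement's English description precedes it below -/
import Mathlib

section
/- Let W and W′ be real Banach spaces, D ⊆ W a linear subspace, and d : D → W′ a linear map (not assumed continuous). Let V_h ⊆ W and V′_h ⊆ W′ be closed subspaces with V_h ⊆ D and d(V_h) ⊆ V′_h. Let Q : W → W and Q′ : W′ → W′ be bounded linear operators with Q(W) ⊆ V_h and Q′(W′) ⊆ V′_h, satisfying the commutation relation Q′(d x) = d(Q x) for all x ∈ D, and suppose there is 0 ≤ ε < 1 with ‖Q v − v‖ ≤ ε‖v‖ for all v ∈ V_h and ‖Q′ v′ − v′‖ ≤ ε‖v′‖ for all v′ ∈ V′_h. Then the projections π := (Q|_{V_h})^{-1} ∘ Q and π′ := (Q′|_{V′_h})^{-1} ∘ Q′ satisfy the commutation relation π′(d x) = d(π x) for all x ∈ D. -/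
/-- Commuting quasi-interpolants yield commuting smoothed projections.
Here `d : D → W′` is a linear (not necessarily continuous) map on a subspace `D ⊆ W`,
`Q, Q′` are bounded operators with ranges in the closed subspaces `V_h ⊆ D`, `V′_h`,
commuting with `d` and uniformly `ε`-close to the identity on the discrete spaces
(`0 ≤ ε < 1`).  The projections `π = (Q|_{V_h})⁻¹ ∘ Q` and `π′ = (Q′|_{V′_h})⁻¹ ∘ Q′`
are characterized by: `π x ∈ V_h` and `Q (π x) = Q x` (and similarly for `π′`), since
`Q|_{V_h}` is injective.  The conclusion is `π′ (d x) = d (π x)` for all `x ∈ D`. -/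
theorem smoothed_projections_commute
    {W W' : Type*}
    [NormedAddCommGroup W] [NormedSpace ℝ W] [CompleteSpace W]
    [NormedAddCommGroup W'] [NormedSpace ℝ W'] [CompleteSpace W']
    (D : Submodule ℝ W) (d : D →ₗ[ℝ] W')
    (Vh : Submodule ℝ W) (Vh' : Submodule ℝ W')
    (hVhc : IsClosed (Vh : Set W)) (hVh'c : IsClosed (Vh' : Set W'))
    (hVhD : Vh ≤ D)
    (hdVh : ∀ (v : W) (hv : v ∈ Vh), d ⟨v, hVhD hv⟩ ∈ Vh')
    (Q : W →L[ℝ] W) (Q' : W' →L[ℝ] W')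
    (hQr : ∀ x : W, Q x ∈ Vh) (hQ'r : ∀ y : W', Q' y ∈ Vh')
    (hcomm : ∀ x : D, Q' (d x) = d ⟨Q x, hVhD (hQr x)⟩)
    (ε : ℝ) (hε0 : 0 ≤ ε) (hε1 : ε < 1)
    (hQnear : ∀ v ∈ Vh, ‖Q v - v‖ ≤ ε * ‖v‖)
    (hQ'near : ∀ v' ∈ Vh', ‖Q' v' - v'‖ ≤ ε * ‖v'‖)
    (π : W →L[ℝ] W) (π' : W' →L[ℝ] W')
    (hπmem : ∀ x : W, π x ∈ Vh) (hπ'mem : ∀ y : W', π' y ∈ Vh')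
    (hπdef : ∀ x : W, Q (π x) = Q x) (hπ'def : ∀ y : W', Q' (π' y) = Q' y) :
    ∀ x : D, π' (d x) = d ⟨π x, hVhD (hπmem x)⟩ := by
  intro x
  -- Q' is injective on Vh'
  have hinj : ∀ v ∈ Vh', ∀ w ∈ Vh', Q' v = Q' w → v = w := by
    intro v hv w hw hvw
    have hmem : v - w ∈ Vh' := sub_mem hv hw
    have h1 : ‖Q' (v - w) - (v - w)‖ ≤ ε * ‖v - w‖ := hQ'near _ hmem
    have h2 : Q' (v - w) = 0 := by simp [map_sub, hvw]
    rw [h2, zero_sub, norm_neg] at h1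
    have : ‖v - w‖ ≤ 0 := by nlinarith [norm_nonneg (v - w)]
    have : v - w = 0 := norm_le_zero_iff.mp this
    exact sub_eq_zero.mp this
  have h1 : Q' (π' (d x)) = Q' (d ⟨π x, hVhD (hπmem x)⟩) := by
    rw [hπ'def, hcomm x, hcomm ⟨π x, hVhD (hπmem x)⟩]
    congr 1
    exact Subtype.ext (hπdef x).symm
  exact hinj _ (hπ'mem _) _ (hdVh _ (hπmem x)) h1
end

section
/- Let V and W′ be real Hilbert spaces and d : V → W′ a bounded linear map. Assume the Poincaré inequality: there is c_P > 0 such that ‖v‖_V ≤ c_P ‖d v‖_{W′} for every v ∈ V orthogonal (in V) to ker d. Let V_h ⊆ V and W′_h ⊆ W′ be closed subspaces with d(V_h) ⊆ W′_h, let π : V → V be a bounded linear operator with range contained in V_h, and let π′ : W′ → W′ be a bounded linear operator with π′ w = w for all w ∈ W′_h and π′ ∘ d = d ∘ π. Then for every v_h ∈ V_h that is orthogonal in V to ker d ∩ V_h, one has ‖v_h‖_V ≤ c_P ‖π‖ ‖d v_h‖_{W′}. -/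
/-- Discrete Poincaré inequality.  Let `d : V → W′` be bounded linear between
real Hilbert spaces with Poincaré inequality `‖v‖ ≤ c_P ‖d v‖` for `v ⟂ ker d`.  Given
closed subspaces `V_h`, `W′_h` with `d(V_h) ⊆ W′_h`, a bounded operator `π` with range in
`V_h`, and a bounded operator `π′` fixing `W′_h` with `π′ ∘ d = d ∘ π`, every `v_h ∈ V_h`
orthogonal to `ker d ∩ V_h` satisfies `‖v_h‖ ≤ c_P ‖π‖ ‖d v_h‖`. -/
theorem discrete_poincare_inequality
    {V W' : Type*}
    [NormedAddCommGroup V] [InnerProductSpace ℝ V] [CompleteSpace V]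
    [NormedAddCommGroup W'] [InnerProductSpace ℝ W'] [CompleteSpace W']
    (d : V →L[ℝ] W') (cP : ℝ) (hcP : 0 < cP)
    (hPoincare : ∀ v ∈ (LinearMap.ker (d : V →ₗ[ℝ] W'))ᗮ, ‖v‖ ≤ cP * ‖d v‖)
    (Vh : Submodule ℝ V) (Wh' : Submodule ℝ W')
    (hVhc : IsClosed (Vh : Set V)) (hWh'c : IsClosed (Wh' : Set W'))
    (hdVh : ∀ v ∈ Vh, d v ∈ Wh')
    (π : V →L[ℝ] V) (hπr : ∀ v : V, π v ∈ Vh)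
    (π' : W' →L[ℝ] W') (hπ'fix : ∀ w ∈ Wh', π' w = w)
    (hcomm : ∀ v : V, π' (d v) = d (π v)) :
    ∀ vh ∈ Vh, vh ∈ (LinearMap.ker (d : V →ₗ[ℝ] W') ⊓ Vh)ᗮ → ‖vh‖ ≤ cP * ‖π‖ * ‖d vh‖ := by
  intro vh hvh hperp
  set K : Submodule ℝ V := LinearMap.ker (d : V →ₗ[ℝ] W') with hK
  have hKclosed : IsClosed (K : Set V) := ContinuousLinearMap.isClosed_ker d
  haveI : CompleteSpace K := hKclosed.completeSpace_coe
  -- orthogonal decomposition vh = z + v, z ∈ K, v ∈ Kᗮ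
  set z : V := (K.orthogonalProjectionOnto vh : V) with hz
  set v : V := vh - z with hv
  have hzK : z ∈ K := (K.orthogonalProjectionOnto vh).2
  have hvperp : v ∈ Kᗮ := Submodule.sub_starProjection_mem_orthogonal (K := K) vh
  have hdv : d v = d vh := by
    have : d z = 0 := hzK
    simp [hv, map_sub, this]
  -- d (π v) = d vh
  have hdπv : d (π v) = d vh := by
    have h1 : d (π v) = π' (d v) := (hcomm v).symm
    rw [h1, hdv]
    exact hπ'fix _ (hdVh vh hvh)
  -- vh - π v ∈ K ⊓ Vh
  have hmem : vh - π v ∈ K ⊓ Vh := by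
    constructor
    · show d (vh - π v) = 0
      simp [map_sub, hdπv]
    · exact Vh.sub_mem hvh (hπr v)
  have hinner : (inner ℝ vh vh : ℝ) = inner ℝ vh (π v) := by
    have := hperp _ hmem
    have h2 : (inner ℝ (vh - π v) vh : ℝ) = 0 := this
    have h3 : (inner ℝ vh (vh - π v) : ℝ) = 0 := by
      rw [real_inner_comm]; exact h2
    rw [inner_sub_right] at h3
    linarith
  rcases eq_or_ne vh 0 with h0 | h0
  · simp only [h0, norm_zero, map_zero]
    positivity
  · have hvhpos : 0 < ‖vh‖ := norm_pos_iff.mpr h0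
    have hbound : ‖vh‖ ^ 2 ≤ ‖vh‖ * (‖π‖ * ‖v‖) := by
      calc ‖vh‖ ^ 2 = (inner ℝ vh vh : ℝ) := (real_inner_self_eq_norm_sq vh).symm
        _ = inner ℝ vh (π v) := hinner
        _ ≤ ‖vh‖ * ‖π v‖ := real_inner_le_norm _ _
        _ ≤ ‖vh‖ * (‖π‖ * ‖v‖) := by
            exact mul_le_mul_of_nonneg_left (π.le_opNorm v) (norm_nonneg _)
    have hvle : ‖v‖ ≤ cP * ‖d vh‖ := by
      have := hPoincare v hvperp
      rwa [hdv] at this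
    have : ‖vh‖ ^ 2 ≤ ‖vh‖ * (‖π‖ * (cP * ‖d vh‖)) := by
      refine le_trans hbound ?_
      have : ‖π‖ * ‖v‖ ≤ ‖π‖ * (cP * ‖d vh‖) :=
        mul_le_mul_of_nonneg_left hvle (norm_nonneg _)
      exact mul_le_mul_of_nonneg_left this (norm_nonneg _)
    nlinarith [norm_nonneg vh]
end
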